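/- Let d ≥ 2 and φ ∈ C^d(ℝ), and let J_d(s₁,…,s_d; φ) be the determinant of the d×d matrix with j-th column (1, s_j, …, s_j^{d−2}/(d−2)!, φ'(s_j))ᵀ. Then for s₁ < ⋯ < s_d there exists a function Ψ(u) = Ψ(u; s₁,…,s_d) with 0 ≤ Ψ(u) ≤ V(s₁,…,s_d)/(s_d − s₁) for all u ∈ [s₁, s_d], such that J_d(s₁,…,s_d; φ) = ∫_{s₁}^{s_d} φ^{(d)}(u) Ψ(u) du, where V(s₁,…,s_d) = ∏_{1≤i<j≤d}(s_j − s_i). -/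

import Mathlib

open Finset

noncomputable def dd (S : Finset ℝ) (f : ℝ → ℝ) : ℝ :=
  ∑ y ∈ S, f y / ∏ z ∈ S.erase y, (y - z)

lemma dd_congr {S : Finset ℝ} {f g : ℝ → ℝ} (h : ∀ y ∈ S, f y = g y) : dd S f = dd S g :=
  Finset.sum_congr rfl fun y hy => by rw [h y hy]

lemma dd_zero (S : Finset ℝ) : dd S (fun _ => 0) = 0 := by simp [dd]

lemma dd_const_mul (S : Finset ℝ) (c : ℝ) (f : ℝ → ℝ) :
    dd S (fun x => c * f x) = c * dd S f := by
  simp [dd, Finset.mul_sum, mul_div_assoc]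

lemma dd_sum {ι : Type*} (S : Finset ℝ) (t : Finset ι) (F : ι → ℝ → ℝ) :
    dd S (fun x => ∑ k ∈ t, F k x) = ∑ k ∈ t, dd S (F k) := by
  unfold dd
  rw [Finset.sum_comm]
  exact Finset.sum_congr rfl fun y _ => by rw [Finset.sum_div]

lemma prod_erase_ne_zero {S : Finset ℝ} {y : ℝ} :
    ∏ z ∈ S.erase y, (y - z) ≠ 0 := by
  refine Finset.prod_ne_zero_iff.mpr fun z hz => ?_
  have hne := Finset.ne_of_mem_erase hz
  intro h
  exact hne (sub_eq_zero.mp h).symm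

/-- Key recursion (Leibniz with a linear factor). -/
lemma dd_linear_mul {S : Finset ℝ} {a : ℝ} (ha : a ∈ S) (u : ℝ) (g : ℝ → ℝ) :
    dd S (fun x => (x - u) * g x) = (a - u) * dd S g + dd (S.erase a) g := by
  unfold dd
  rw [← Finset.add_sum_erase _ _ ha, ← Finset.add_sum_erase _ (fun y => g y / _) ha,
    mul_add]
  have h1 : (a - u) * g a / ∏ z ∈ S.erase a, (a - z)
      = (a - u) * (g a / ∏ z ∈ S.erase a, (a - z)) := by ring
  rw [h1, add_assoc]
  congr 1
  rw [Finset.mul_sum, ← Finset.sum_add_distrib]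
  refine Finset.sum_congr rfl fun y hy => ?_
  have hyS : y ∈ S := Finset.mem_of_mem_erase hy
  have hya : y ≠ a := Finset.ne_of_mem_erase hy
  have haey : a ∈ S.erase y := Finset.mem_erase.mpr ⟨hya.symm, ha⟩
  have hsplit : ∏ z ∈ S.erase y, (y - z)
      = (y - a) * ∏ z ∈ (S.erase y).erase a, (y - z) :=
    (Finset.mul_prod_erase _ _ haey).symm
  rw [Finset.erase_right_comm] at hsplit
  have hP : ∏ z ∈ (S.erase a).erase y, (y - z) ≠ 0 := prod_erase_ne_zero
  have hyane : y - a ≠ 0 := sub_ne_zero.mpr hya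
  rw [hsplit]
  field_simp
  ring

lemma dd_singleton (a : ℝ) (f : ℝ → ℝ) : dd {a} f = f a := by simp [dd]

lemma dd_pair {a b : ℝ} (hab : a ≠ b) (f : ℝ → ℝ) :
    dd {a, b} f = f a / (a - b) + f b / (b - a) := by
  have h1 : ({a, b} : Finset ℝ).erase a = {b} :=
    Finset.erase_insert (Finset.notMem_singleton.mpr hab)
  have h2 : ({a, b} : Finset ℝ).erase b = {a} := by
    rw [Finset.erase_insert_of_ne hab, Finset.erase_singleton]
    rfl
  rw [dd, Finset.sum_pair hab, h1, h2]
  simp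

lemma dd_one {S : Finset ℝ} (h2 : 2 ≤ S.card) : dd S (fun _ => 1) = 0 := by
  classical
  induction S using Finset.strongInduction with
  | _ S IH =>
    rcases eq_or_lt_of_le h2 with hcard | hcard
    · obtain ⟨a, b, hab, rfl⟩ := Finset.card_eq_two.mp hcard.symm
      rw [dd_pair hab]
      rw [div_add_div _ _ (sub_ne_zero.mpr hab) (sub_ne_zero.mpr hab.symm)]
      have h3 : (1 : ℝ) * (b - a) + (a - b) * 1 = 0 := by ring
      rw [h3, zero_div]
    · have h1lt : 1 < S.card := by omega
      obtain ⟨a, haS, b, hbS, hab⟩ := Finset.one_lt_card.mp h1lt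
      have key : ∀ c ∈ S, dd S (fun x => x) = c * dd S (fun _ => 1) + dd (S.erase c) (fun _ => 1) := by
        intro c hc
        have := dd_linear_mul hc 0 (fun _ => 1)
        simpa using this
      have hcea : 2 ≤ (S.erase a).card := by rw [Finset.card_erase_of_mem haS]; omega
      have hceb : 2 ≤ (S.erase b).card := by rw [Finset.card_erase_of_mem hbS]; omega
      have hea : dd (S.erase a) (fun _ => 1) = 0 := IH _ (Finset.erase_ssubset haS) hcea
      have heb : dd (S.erase b) (fun _ => 1) = 0 := IH _ (Finset.erase_ssubset hbS) hceb
      have h1 := key a haS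
      have h2 := key b hbS
      rw [hea] at h1; rw [heb] at h2
      have h4 : (a - b) * dd S (fun _ => 1) = 0 := by linarith
      rcases mul_eq_zero.mp h4 with h | h
      · exact absurd (by linarith : a = b) hab
      · exact h

lemma dd_pow_eq_zero : ∀ (m : ℕ) (u : ℝ) (S : Finset ℝ), m + 2 ≤ S.card →
    dd S (fun x => (x - u) ^ m) = 0 := by
  intro m
  induction m with
  | zero => intro u S hS; rw [dd_congr (fun y _ => pow_zero _)]; exact dd_one hS
  | succ m IH =>
    intro u S hS
    have hne : S.Nonempty := Finset.card_pos.mp (by omega)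
    obtain ⟨a, haS⟩ := hne
    have hc1 : m + 2 ≤ S.card := by omega
    have hc2 : m + 2 ≤ (S.erase a).card := by rw [Finset.card_erase_of_mem haS]; omega
    have h1 : dd S (fun x => (x - u) ^ (m + 1)) = dd S (fun x => (x - u) * (x - u) ^ m) :=
      dd_congr fun y _ => by ring
    rw [h1, dd_linear_mul haS, IH u S hc1, IH u (S.erase a) hc2, mul_zero, add_zero]

lemma dd_pow_self : ∀ (m : ℕ) (S : Finset ℝ), S.card = m + 1 →
    dd S (fun x => x ^ m) = 1 := by
  intro m
  induction m with
  | zero =>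
    intro S hS
    obtain ⟨a, rfl⟩ := Finset.card_eq_one.mp hS
    simp [dd_singleton]
  | succ m IH =>
    intro S hS
    have hne : S.Nonempty := Finset.card_pos.mp (by omega)
    obtain ⟨a, haS⟩ := hne
    have hce : (S.erase a).card = m + 1 := by rw [Finset.card_erase_of_mem haS]; omega
    have h1 : dd S (fun x => x ^ (m + 1)) = dd S (fun x => (x - 0) * x ^ m) :=
      dd_congr fun y _ => by ring
    have h2 : dd S (fun x => x ^ m) = dd S (fun x => (x - 0) ^ m) :=
      dd_congr fun y _ => by ring
    rw [h1, dd_linear_mul haS 0 (fun x => x ^ m), h2,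
      dd_pow_eq_zero m 0 S (by omega), IH (S.erase a) hce]
    ring

noncomputable def tp (k : ℕ) (u x : ℝ) : ℝ := if u < x then (x - u) ^ k else 0

lemma tp_succ (k : ℕ) (u x : ℝ) : tp (k + 1) u x = (x - u) * tp k u x := by
  unfold tp; split_ifs with h <;> ring

lemma tp_of_lt {k : ℕ} {u x : ℝ} (h : u < x) : tp k u x = (x - u) ^ k := if_pos h

lemma tp_of_ge {k : ℕ} {u x : ℝ} (h : x ≤ u) : tp k u x = 0 := if_neg (not_lt.mpr h)

lemma dd_tp_key {S : Finset ℝ} {a b : ℝ} (ha : a ∈ S) (hb : b ∈ S) (k : ℕ) (u : ℝ) :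
    (b - a) * dd S (tp (k + 1) u) =
      (b - u) * dd (S.erase a) (tp k u) + (u - a) * dd (S.erase b) (tp k u) := by
  have hX : dd S (tp (k + 1) u) = dd S (fun x => (x - u) * tp k u x) :=
    dd_congr fun y _ => tp_succ k u y
  have Ea := dd_linear_mul ha u (tp k u)
  have Eb := dd_linear_mul hb u (tp k u)
  linear_combination (b - a) * hX + (b - u) * Ea + (u - a) * Eb

lemma dd_tp_poly {S : Finset ℝ} {k : ℕ} {u : ℝ} (hS : k + 2 ≤ S.card)
    (h : ∀ y ∈ S, u < y) : dd S (tp k u) = 0 := by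
  rw [dd_congr (fun y hy => tp_of_lt (h y hy))]
  exact dd_pow_eq_zero k u S hS

lemma dd_tp_null {S : Finset ℝ} {k : ℕ} {u : ℝ} (h : ∀ y ∈ S, y ≤ u) :
    dd S (tp k u) = 0 := by
  rw [dd_congr (fun y hy => tp_of_ge (h y hy))]
  exact dd_zero S

lemma dd_tp_pair {a b u : ℝ} (hab : a < b) (k : ℕ) :
    dd {a, b} (tp k u) = (tp k u b - tp k u a) / (b - a) := by
  rw [dd_pair hab.ne]
  have h1 : a - b ≠ 0 := sub_ne_zero.mpr hab.ne
  have h2 : b - a ≠ 0 := sub_ne_zero.mpr hab.ne'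
  field_simp
  ring

lemma dd_tp_nonneg : ∀ (k : ℕ) (u : ℝ) (S : Finset ℝ), S.card = k + 2 →
    0 ≤ dd S (tp k u) := by
  intro k
  induction k with
  | zero =>
    intro u S hS
    obtain ⟨a, b, hab, rfl⟩ := Finset.card_eq_two.mp hS
    rcases lt_or_gt_of_ne hab with h | h
    · rw [dd_tp_pair h]
      refine div_nonneg ?_ (by linarith)
      unfold tp; split_ifs <;> norm_num <;> linarith
    · rw [Finset.pair_comm, dd_tp_pair h]
      refine div_nonneg ?_ (by linarith)
      unfold tp; split_ifs <;> norm_num <;> linarith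
  | succ k IH =>
    intro u S hS
    have hne : S.Nonempty := Finset.card_pos.mp (by omega)
    set a := S.min' hne with hadef
    set b := S.max' hne with hbdef
    have haS : a ∈ S := S.min'_mem hne
    have hbS : b ∈ S := S.max'_mem hne
    have hab : a < b := S.min'_lt_max'_of_card (by omega)
    by_cases hua : u < a
    · rw [dd_tp_poly (by omega) (fun y hy => lt_of_lt_of_le hua (S.min'_le y hy))]
    by_cases hub : b ≤ u
    · rw [dd_tp_null (fun y hy => le_trans (S.le_max' y hy) hub)]
    push_neg at hua hub
    have key := dd_tp_key haS hbS k u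
    have HA : 0 ≤ dd (S.erase a) (tp k u) := by
      refine IH u _ ?_; rw [Finset.card_erase_of_mem haS]; omega
    have HB : 0 ≤ dd (S.erase b) (tp k u) := by
      refine IH u _ ?_; rw [Finset.card_erase_of_mem hbS]; omega
    have hba : 0 < b - a := by linarith
    have hrhs : 0 ≤ (b - u) * dd (S.erase a) (tp k u) + (u - a) * dd (S.erase b) (tp k u) := by
      have := mul_nonneg (by linarith : (0:ℝ) ≤ b - u) HA
      have := mul_nonneg (by linarith : (0:ℝ) ≤ u - a) HB
      linarith
    nlinarith [key, hrhs, hba]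

noncomputable def cb : ℕ → ℝ
  | 0 => 1
  | 1 => 1
  | (k + 2) => 2 * cb (k + 1)

lemma cb_nonneg : ∀ k, 0 ≤ cb k := by
  intro k
  induction k using Nat.strong_induction_on with
  | _ k IH =>
    match k with
    | 0 => norm_num [cb]
    | 1 => norm_num [cb]
    | (k + 2) =>
      have := IH (k + 1) (by omega)
      rw [cb]
      linarith

lemma cb_le_prod : ∀ k, cb k ≤ ∏ i ∈ Finset.range (k + 1), (Nat.factorial i : ℝ) := by
  intro k
  induction k using Nat.strong_induction_on with
  | _ k IH =>
    match k with
    | 0 => norm_num [cb]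
    | 1 => simp [cb, Finset.prod_range_succ, Nat.factorial]
    | (k + 2) =>
      have h1 := IH (k + 1) (by omega)
      rw [cb, Finset.prod_range_succ]
      have hpos : (0:ℝ) < ∏ i ∈ Finset.range (k + 2), (Nat.factorial i : ℝ) :=
        Finset.prod_pos fun i _ => by positivity
      have h2 : (2:ℝ) ≤ (Nat.factorial (k + 2) : ℝ) := by
        have := Nat.factorial_le (show 2 ≤ k + 2 by omega)
        calc (2:ℝ) = ((Nat.factorial 2 : ℕ) : ℝ) := by norm_num [Nat.factorial]
        _ ≤ _ := by exact_mod_cast this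
      nlinarith

lemma max'_erase_min' {S : Finset ℝ} (hne : S.Nonempty) (h : 1 < S.card)
    (hne' : (S.erase (S.min' hne)).Nonempty) :
    (S.erase (S.min' hne)).max' hne' = S.max' hne := by
  apply le_antisymm
  · exact Finset.max'_le _ _ _ fun y hy => S.le_max' y (Finset.mem_of_mem_erase hy)
  · exact Finset.le_max' _ _ (Finset.mem_erase.mpr
      ⟨(S.min'_lt_max'_of_card h).ne', S.max'_mem hne⟩)

lemma min'_erase_max' {S : Finset ℝ} (hne : S.Nonempty) (h : 1 < S.card)
    (hne' : (S.erase (S.max' hne)).Nonempty) :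
    (S.erase (S.max' hne)).min' hne' = S.min' hne := by
  apply le_antisymm
  · exact Finset.min'_le _ _ (Finset.mem_erase.mpr
      ⟨(S.min'_lt_max'_of_card h).ne, S.min'_mem hne⟩)
  · exact Finset.le_min' _ _ _ fun y hy => S.min'_le y (Finset.mem_of_mem_erase hy)

lemma dd_tp_le : ∀ (k : ℕ) (u : ℝ) (S : Finset ℝ) (hne : S.Nonempty), S.card = k + 2 →
    (S.max' hne - S.min' hne) * dd S (tp k u) ≤ cb k := by
  intro k
  induction k using Nat.strong_induction_on with
  | _ k IH =>
    match k with
    | 0 =>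
      intro u S hne hS
      set a := S.min' hne
      set b := S.max' hne
      have hab : a < b := S.min'_lt_max'_of_card (by omega)
      have hsub : ({a, b} : Finset ℝ) ⊆ S := by
        intro y hy
        rcases Finset.mem_insert.mp hy with rfl | hy
        · exact S.min'_mem hne
        · rw [Finset.mem_singleton.mp hy]; exact S.max'_mem hne
      have hSeq : ({a, b} : Finset ℝ) = S :=
        Finset.eq_of_subset_of_card_le hsub (by rw [hS, Finset.card_pair hab.ne])
      rw [← hSeq, dd_tp_pair hab]
      have hba : (0:ℝ) < b - a := by linarith
      rw [mul_div_cancel₀ _ hba.ne']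
      show tp 0 u b - tp 0 u a ≤ cb 0
      unfold tp cb; split_ifs <;> norm_num <;> linarith
    | 1 =>
      intro u S hne hS
      set a := S.min' hne with hadef
      set b := S.max' hne with hbdef
      have haS : a ∈ S := S.min'_mem hne
      have hbS : b ∈ S := S.max'_mem hne
      have hab : a < b := S.min'_lt_max'_of_card (by omega)
      -- the middle point
      have hmb : b ∈ S.erase a := Finset.mem_erase.mpr ⟨hab.ne', hbS⟩
      have hcard1 : ((S.erase a).erase b).card = 1 := by
        rw [Finset.card_erase_of_mem (Finset.mem_erase.mpr ⟨hab.ne', hbS⟩),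
          Finset.card_erase_of_mem haS, hS]
      obtain ⟨m, hm⟩ := Finset.card_eq_one.mp hcard1
      have hmS : m ∈ (S.erase a).erase b := by rw [hm]; exact Finset.mem_singleton_self m
      have hmSa : m ∈ S.erase a := Finset.mem_of_mem_erase hmS
      have hmb' : m ≠ b := Finset.ne_of_mem_erase hmS
      have hma : m ≠ a := Finset.ne_of_mem_erase hmSa
      have hmmem : m ∈ S := Finset.mem_of_mem_erase hmSa
      have ham : a < m := lt_of_le_of_ne (S.min'_le m hmmem) (Ne.symm hma)
      have hmb2 : m < b := lt_of_le_of_ne (S.le_max' m hmmem) hmb'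
      have hSa : S.erase a = {m, b} := by
        symm
        refine Finset.eq_of_subset_of_card_le ?_ ?_
        · intro y hy
          rcases Finset.mem_insert.mp hy with rfl | hy
          · exact hmSa
          · rw [Finset.mem_singleton.mp hy]; exact hmb
        · rw [Finset.card_erase_of_mem haS, hS, Finset.card_pair hmb2.ne]
      have hSb : S.erase b = {a, m} := by
        symm
        refine Finset.eq_of_subset_of_card_le ?_ ?_
        · intro y hy
          rcases Finset.mem_insert.mp hy with rfl | hy
          · exact Finset.mem_erase.mpr ⟨hab.ne, haS⟩
          · rw [Finset.mem_singleton.mp hy]; exact Finset.mem_erase.mpr ⟨hmb', hmmem⟩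
        · rw [Finset.card_erase_of_mem hbS, hS, Finset.card_pair ham.ne]
      have key := dd_tp_key haS hbS 0 u
      rw [hSa, hSb, dd_tp_pair hmb2, dd_tp_pair ham] at key
      have hba : (0:ℝ) < b - a := by linarith
      have hbm : (0:ℝ) < b - m := by linarith
      have hma2 : (0:ℝ) < m - a := by linarith
      show (b - a) * dd S (tp 1 u) ≤ cb 1
      have hcb1 : cb 1 = 1 := rfl
      rw [key, hcb1]
      rcases lt_or_ge u a with h | h
      · rw [tp_of_lt h, tp_of_lt (h.trans ham), tp_of_lt (h.trans hab)]
        norm_num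
      rcases lt_or_ge u m with h2 | h2
      · rw [tp_of_ge h, tp_of_lt h2, tp_of_lt (h2.trans hmb2)]
        simp only [pow_zero, sub_self, sub_zero, zero_div, mul_zero, zero_add, add_zero,
          mul_one_div]
        rw [div_le_one hma2]
        linarith
      rcases lt_or_ge u b with h3 | h3
      · rw [tp_of_ge (ham.le.trans h2), tp_of_ge h2, tp_of_lt h3]
        simp only [pow_zero, sub_self, sub_zero, zero_div, mul_zero, zero_add, add_zero,
          mul_one_div]
        rw [div_le_one hbm]
        linarith
      · rw [tp_of_ge (ham.le.trans h2), tp_of_ge h2, tp_of_ge h3]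
        norm_num
    | (k + 2) =>
      intro u S hne hS
      set a := S.min' hne with hadef
      set b := S.max' hne with hbdef
      have haS : a ∈ S := S.min'_mem hne
      have hbS : b ∈ S := S.max'_mem hne
      have hab : a < b := S.min'_lt_max'_of_card (by omega)
      have key := dd_tp_key haS hbS (k + 1) u
      have hcbn := cb_nonneg (k + 1)
      -- first term
      have hneA : (S.erase a).Nonempty := Finset.card_pos.mp (by
        rw [Finset.card_erase_of_mem haS]; omega)
      have hcardA : (S.erase a).card = (k + 1) + 2 := by
        rw [Finset.card_erase_of_mem haS]; omega
      have hmaxA : (S.erase a).max' hneA = b := max'_erase_min' hne (by omega) hneA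
      have hA : (b - u) * dd (S.erase a) (tp (k + 1) u) ≤ cb (k + 1) := by
        by_cases hu : u < (S.erase a).min' hneA
        · rw [dd_tp_poly (by omega) (fun y hy => lt_of_lt_of_le hu ((S.erase a).min'_le y hy))]
          simpa using hcbn
        · push_neg at hu
          have hApos : 0 ≤ dd (S.erase a) (tp (k + 1) u) := dd_tp_nonneg (k + 1) u _ hcardA
          calc (b - u) * dd (S.erase a) (tp (k + 1) u)
              ≤ ((S.erase a).max' hneA - (S.erase a).min' hneA) * dd (S.erase a) (tp (k + 1) u) := by
                have hle : b - u ≤ (S.erase a).max' hneA - (S.erase a).min' hneA := by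
                  rw [hmaxA]; linarith
                exact mul_le_mul_of_nonneg_right hle hApos
            _ ≤ cb (k + 1) := IH (k + 1) (by omega) u _ hneA hcardA
      -- second term
      have hneB : (S.erase b).Nonempty := Finset.card_pos.mp (by
        rw [Finset.card_erase_of_mem hbS]; omega)
      have hcardB : (S.erase b).card = (k + 1) + 2 := by
        rw [Finset.card_erase_of_mem hbS]; omega
      have hminB : (S.erase b).min' hneB = a := min'_erase_max' hne (by omega) hneB
      have hB : (u - a) * dd (S.erase b) (tp (k + 1) u) ≤ cb (k + 1) := by
        by_cases hu : (S.erase b).max' hneB < u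
        · rw [dd_tp_null (fun y hy => le_of_lt (lt_of_le_of_lt ((S.erase b).le_max' y hy) hu))]
          simpa using hcbn
        · push_neg at hu
          have hBpos : 0 ≤ dd (S.erase b) (tp (k + 1) u) := dd_tp_nonneg (k + 1) u _ hcardB
          calc (u - a) * dd (S.erase b) (tp (k + 1) u)
              ≤ ((S.erase b).max' hneB - (S.erase b).min' hneB) * dd (S.erase b) (tp (k + 1) u) := by
                have hle : u - a ≤ (S.erase b).max' hneB - (S.erase b).min' hneB := by
                  rw [hminB]; linarith
                exact mul_le_mul_of_nonneg_right hle hBpos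
            _ ≤ cb (k + 1) := IH (k + 1) (by omega) u _ hneB hcardB
      show (b - a) * dd S (tp (k + 2) u) ≤ cb (k + 2)
      rw [show (k + 2) = (k + 1) + 1 from rfl] at *
      rw [key, cb]
      linarith

open MeasureTheory Set intervalIntegral

lemma iterDW_eq {f : ℝ → ℝ} {N : ℕ} (hf : ContDiff ℝ (N : ℕ∞) f) {s : Set ℝ}
    (hs : UniqueDiffOn ℝ s) : ∀ (n : ℕ), n ≤ N → ∀ t ∈ s,
    iteratedDerivWithin n f s t = iteratedDeriv n f t := by
  intro n
  induction n with
  | zero => intro _ t _; simp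
  | succ n IH =>
    intro hn t ht
    rw [iteratedDerivWithin_succ]
    have heq : Set.EqOn (iteratedDerivWithin n f s) (iteratedDeriv n f) s :=
      fun y hy => IH (by omega) y hy
    rw [derivWithin_congr heq (heq ht)]
    have hdiff : DifferentiableAt ℝ (iteratedDeriv n f) t := by
      have := hf.differentiable_iteratedDeriv n (by exact_mod_cast Nat.lt_of_succ_le hn)
      exact this t
    rw [hdiff.derivWithin (hs.uniqueDiffWithinAt ht), iteratedDeriv_succ]

/-- Taylor's theorem with integral form of the remainder. -/
lemma taylor_integral_remainder' {f : ℝ → ℝ} {n : ℕ} (hf : ContDiff ℝ ((n + 1 : ℕ) : ℕ∞) f)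
    {a x : ℝ} (hax : a ≤ x) :
    f x = (∑ k ∈ Finset.range (n + 1), (k.factorial : ℝ)⁻¹ * (x - a) ^ k * iteratedDeriv k f a)
      + ∫ u in a..x, (n.factorial : ℝ)⁻¹ * (x - u) ^ n * iteratedDeriv (n + 1) f u := by
  rcases eq_or_lt_of_le hax with rfl | hax'
  · rw [intervalIntegral.integral_same, add_zero, Finset.sum_eq_single 0]
    · simp
    · intro k _ hk
      rcases Nat.exists_eq_succ_of_ne_zero hk with ⟨m, rfl⟩
      simp [sub_self, zero_pow]
    · simp
  · have huniq : UniqueDiffOn ℝ (Icc a x) := uniqueDiffOn_Icc hax'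
    have hfon : ContDiffOn ℝ (n : ℕ∞) f (Icc a x) := (hf.of_le (by exact_mod_cast Nat.le_succ n)).contDiffOn
    have heqn : ∀ t ∈ Icc a x, iteratedDerivWithin (n + 1) f (Icc a x) t = iteratedDeriv (n + 1) f t :=
      iterDW_eq hf huniq (n + 1) le_rfl
    have heqk : ∀ (k : ℕ), k ≤ n + 1 → ∀ t ∈ Icc a x,
        iteratedDerivWithin k f (Icc a x) t = iteratedDeriv k f t := iterDW_eq hf huniq
    have hdiffn : DifferentiableOn ℝ (iteratedDerivWithin n f (Icc a x)) (Ioo a x) := by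
      have hcont : Differentiable ℝ (iteratedDeriv n f) :=
        hf.differentiable_iteratedDeriv n (by exact_mod_cast Nat.lt_succ_self n)
      refine (hcont.differentiableOn).congr fun y hy =>
        heqk n (Nat.le_succ n) y (Ioo_subset_Icc_self hy)
    -- FTC for the Taylor polynomial t ↦ P(t) := taylorWithinEval f n (Icc a x) t x
    have hderiv : ∀ t ∈ Ioo a x, HasDerivAt (fun y => taylorWithinEval f n (Icc a x) y x)
        ((((n.factorial : ℝ))⁻¹ * (x - t) ^ n) • iteratedDerivWithin (n + 1) f (Icc a x) t) t :=
      fun t ht => taylorWithinEval_hasDerivAt_Ioo x hax' ht hfon hdiffn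
    have hcontP : ContinuousOn (fun t => taylorWithinEval f n (Icc a x) t x) (Icc a x) :=
      continuousOn_taylorWithinEval huniq hfon
    have hcontD : ContinuousOn (fun t => (((n.factorial : ℝ))⁻¹ * (x - t) ^ n) •
        iteratedDerivWithin (n + 1) f (Icc a x) t) (Icc a x) := by
      refine (ContinuousOn.mul continuousOn_const ((continuousOn_const.sub continuousOn_id).pow n)).smul ?_
      exact ((hf.continuous_iteratedDeriv (n + 1) le_rfl).continuousOn).congr heqn
    have hint : IntervalIntegrable (fun t => (((n.factorial : ℝ))⁻¹ * (x - t) ^ n) •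
        iteratedDerivWithin (n + 1) f (Icc a x) t) volume a x :=
      (hcontD.mono (by rw [uIcc_of_le hax])).intervalIntegrable
    have hFTC := intervalIntegral.integral_eq_sub_of_hasDerivAt_of_le hax hcontP hderiv hint
    rw [taylorWithinEval_self] at hFTC
    have hPa : taylorWithinEval f n (Icc a x) a x
        = ∑ k ∈ Finset.range (n + 1), (k.factorial : ℝ)⁻¹ * (x - a) ^ k * iteratedDeriv k f a := by
      rw [taylor_within_apply]
      refine Finset.sum_congr rfl fun k hk => ?_
      rw [heqk k (by have := Finset.mem_range.mp hk; omega) a (left_mem_Icc.mpr hax), smul_eq_mul]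
    have hIcong : (∫ u in a..x, (((n.factorial : ℝ))⁻¹ * (x - u) ^ n) •
          iteratedDerivWithin (n + 1) f (Icc a x) u)
        = ∫ u in a..x, (n.factorial : ℝ)⁻¹ * (x - u) ^ n * iteratedDeriv (n + 1) f u := by
      refine intervalIntegral.integral_congr fun u hu => ?_
      rw [uIcc_of_le hax] at hu
      rw [heqn u hu, smul_eq_mul]
    rw [hIcong] at hFTC
    rw [hPa] at hFTC
    linarith

section Det

open Finset Matrix

variable {d : ℕ} (s : Fin d → ℝ)

/-- The factorial-scaled Vandermonde-type matrix. -/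
noncomputable def Bmat : Matrix (Fin d) (Fin d) ℝ :=
  Matrix.of fun i j => s j ^ i.val / (Nat.factorial i.val)

lemma det_updateRow_linear {R : Type*} [CommRing R] {d : ℕ} (A : Matrix (Fin d) (Fin d) R)
    (r : Fin d) {ι : Type*} (t : Finset ι) (c : ι → R) (u : ι → Fin d → R) :
    (A.updateRow r (∑ m ∈ t, c m • u m)).det = ∑ m ∈ t, c m * (A.updateRow r (u m)).det := by
  classical
  induction t using Finset.induction_on with
  | empty =>
    simp only [Finset.sum_empty]
    rw [show ((0 : Fin d → R)) = (0 : Fin d → R) from rfl]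
    exact det_eq_zero_of_row_eq_zero r (fun j => by simp)
  | insert _ _ hnm IH =>
    rw [Finset.sum_insert hnm, Matrix.det_updateRow_add, Finset.sum_insert hnm, ← IH]
    congr 1
    rw [Matrix.det_updateRow_smul]

lemma dd_image {d : ℕ} {s : Fin d → ℝ} (hs : StrictMono s) (f : ℝ → ℝ) :
    dd (Finset.image s Finset.univ) f
      = ∑ j : Fin d, f (s j) / ∏ i ∈ Finset.univ.erase j, (s j - s i) := by
  unfold dd
  rw [Finset.sum_image (fun a _ b _ h => hs.injective h)]
  refine Finset.sum_congr rfl fun j _ => ?_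
  congr 1
  rw [← Finset.image_erase hs.injective]
  rw [Finset.prod_image (fun a _ b _ h => hs.injective h)]

lemma vandermonde_det_pos {d : ℕ} {s : Fin d → ℝ} (hs : StrictMono s) :
    0 < (Matrix.vandermonde s).det := by
  rw [Matrix.det_vandermonde]
  refine Finset.prod_pos fun i _ => Finset.prod_pos fun j hj => ?_
  exact sub_pos.mpr (hs (Finset.mem_Ioi.mp hj))

lemma det_Bmat {d : ℕ} (s : Fin d → ℝ) :
    (Bmat s).det = (∏ i : Fin d, ((i.val).factorial : ℝ))⁻¹ * (Matrix.vandermonde s).det := by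
  have h1 : Bmat s = Matrix.of fun i j =>
      (((i.val).factorial : ℝ))⁻¹ * ((Matrix.vandermonde s)ᵀ i j) := by
    ext i j
    simp [Bmat, Matrix.vandermonde, div_eq_inv_mul]
  rw [h1, Matrix.det_mul_column, Matrix.det_transpose]
  rw [← Finset.prod_inv_distrib]

lemma det_dd {d : ℕ} (hd : 1 ≤ d) {s : Fin d → ℝ} (hs : StrictMono s) (f : ℝ → ℝ) :
    ((Bmat s).updateRow ⟨d - 1, by omega⟩ (fun j => f (s j))).det
      = ((∏ i ∈ Finset.range (d - 1), (Nat.factorial i : ℝ))⁻¹ * (Matrix.vandermonde s).det)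
        * dd (Finset.image s Finset.univ) f := by
  classical
  set lastI : Fin d := ⟨d - 1, by omega⟩ with hlastI
  set W := Matrix.vandermonde s with hW
  have hWdet : IsUnit W.det := isUnit_iff_ne_zero.mpr (vandermonde_det_pos hs).ne'
  set c : Fin d → ℝ := W⁻¹ *ᵥ (fun j => f (s j)) with hc
  have hvc : (fun j => f (s j)) = ∑ m : Fin d, c m • (fun j => s j ^ (m : Fin d).val) := by
    have h0 : W *ᵥ c = (fun j => f (s j)) := by
      rw [hc, Matrix.mulVec_mulVec, Matrix.mul_nonsing_inv _ hWdet, Matrix.one_mulVec]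
    funext j
    have h0j := congrFun h0 j
    rw [← h0j, Matrix.mulVec, dotProduct, Finset.sum_apply]
    refine Finset.sum_congr rfl fun m _ => ?_
    simp [hW, Matrix.vandermonde, mul_comm]
  -- card of the point set
  have hcardS : (Finset.image s Finset.univ).card = d := by
    rw [Finset.card_image_of_injective _ hs.injective, Finset.card_univ, Fintype.card_fin]
  -- expand LHS
  rw [hvc, det_updateRow_linear]
  -- expand RHS
  have hRHS : dd (Finset.image s Finset.univ) f
      = ∑ m : Fin d, c m * dd (Finset.image s Finset.univ) (fun x => x ^ (m : Fin d).val) := by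
    have hfv : ∀ j, f (s j) = ∑ m : Fin d, c m * s j ^ (m : Fin d).val := by
      intro j
      have := congrFun hvc j
      simpa [Finset.sum_apply] using this
    rw [dd_image hs]
    have : ∀ j : Fin d, f (s j) / ∏ i ∈ Finset.univ.erase j, (s j - s i)
        = ∑ m : Fin d, c m * (s j ^ (m : Fin d).val / ∏ i ∈ Finset.univ.erase j, (s j - s i)) := by
      intro j
      rw [hfv j, Finset.sum_div]
      exact Finset.sum_congr rfl fun m _ => by rw [mul_div_assoc]
    rw [Finset.sum_congr rfl fun j _ => this j, Finset.sum_comm]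
    refine Finset.sum_congr rfl fun m _ => ?_
    rw [← Finset.mul_sum, dd_image hs]
  rw [hRHS, Finset.mul_sum]
  -- compare termwise
  refine Finset.sum_congr rfl fun m _ => ?_
  by_cases hm : m = lastI
  · subst hm
    -- the top-degree term
    have hrow : (fun j => s j ^ (lastI : Fin d).val)
        = (((d - 1).factorial : ℝ)) • (Bmat s lastI) := by
      funext j
      have : ((d-1).factorial : ℝ) ≠ 0 := Nat.cast_ne_zero.mpr (Nat.factorial_ne_zero _)
      simp only [Pi.smul_apply, smul_eq_mul, Bmat, Matrix.of_apply, hlastI]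
      field_simp
    rw [hrow, Matrix.det_updateRow_smul, Matrix.updateRow_eq_self, det_Bmat]
    have hdd1 : dd (Finset.image s Finset.univ) (fun x => x ^ (lastI : Fin d).val) = 1 := by
      refine dd_pow_self (d - 1) _ ?_
      rw [hcardS]; omega
    rw [hdd1]
    have hfacprod : (∏ i : Fin d, ((i.val).factorial : ℝ))
        = (∏ i ∈ Finset.range (d - 1), (Nat.factorial i : ℝ)) * ((d - 1).factorial : ℝ) := by
      rw [Fin.prod_univ_eq_prod_range (fun i => ((Nat.factorial i : ℝ)))]
      rw [show d = (d - 1) + 1 by omega, Finset.prod_range_succ]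
      congr 1
    have hf1 : ((d-1).factorial : ℝ) ≠ 0 := Nat.cast_ne_zero.mpr (Nat.factorial_ne_zero _)
    have hf2 : (∏ i ∈ Finset.range (d - 1), (Nat.factorial i : ℝ)) ≠ 0 :=
      Finset.prod_ne_zero_iff.mpr fun i _ => Nat.cast_ne_zero.mpr (Nat.factorial_ne_zero _)
    rw [hfacprod]
    field_simp
    ring
  · -- lower degree: both sides vanish
    have hmlt := m.isLt
    have hmval : (m : Fin d).val < d - 1 := by
      by_contra hcon
      push_neg at hcon
      exact hm (Fin.ext (by simp only [hlastI]; omega))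
    have hrow : (fun j => s j ^ (m : Fin d).val)
        = (((m : Fin d).val.factorial : ℝ)) • (Bmat s m) := by
      funext j
      have : (((m : Fin d).val.factorial : ℝ)) ≠ 0 := Nat.cast_ne_zero.mpr (Nat.factorial_ne_zero _)
      simp only [Pi.smul_apply, smul_eq_mul, Bmat, Matrix.of_apply]
      field_simp
    rw [hrow, Matrix.det_updateRow_smul, Matrix.det_updateRow_eq_zero (by
      intro h; exact hm (by rw [h]))]
    have hdd0 : dd (Finset.image s Finset.univ) (fun x => x ^ (m : Fin d).val) = 0 := by
      have h1 : dd (Finset.image s Finset.univ) (fun x => x ^ (m : Fin d).val)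
          = dd (Finset.image s Finset.univ) (fun x => (x - 0) ^ (m : Fin d).val) :=
        dd_congr fun y _ => by rw [sub_zero]
      rw [h1]
      refine dd_pow_eq_zero _ 0 _ ?_
      rw [hcardS]; omega
    rw [hdd0]
    ring

end Det

open MeasureTheory

/-- The matrix whose `j`-th column is `(1, s_j, s_j²/2!, …, s_j^{m-2}/(m-2)!, φ'(s_j))ᵀ`. -/
noncomputable def Jmat (m : ℕ) (s : Fin m → ℝ) (φ : ℝ → ℝ) : Matrix (Fin m) (Fin m) ℝ :=
  Matrix.of fun i j =>
    if i.val < m - 1 then s j ^ i.val / (Nat.factorial i.val) else deriv φ (s j)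

/-- The generalized Vandermonde-type determinant `J_m(s₁,…,s_m; φ)`. -/
noncomputable def Jdet (m : ℕ) (s : Fin m → ℝ) (φ : ℝ → ℝ) : ℝ := (Jmat m s φ).det

set_option maxHeartbeats 1000000 in
theorem stmt8 (d : ℕ) (hd : 2 ≤ d) (φ : ℝ → ℝ) (hφ : ContDiff ℝ (d : ℕ∞) φ)
    (s : Fin d → ℝ) (hs : StrictMono s) :
    ∃ Ψ : ℝ → ℝ,
      (∀ u ∈ Set.Icc (s ⟨0, by omega⟩) (s ⟨d - 1, by omega⟩),
        0 ≤ Ψ u ∧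
          Ψ u ≤ (∏ i : Fin d, ∏ j ∈ Finset.Ioi i, (s j - s i)) /
            (s ⟨d - 1, by omega⟩ - s ⟨0, by omega⟩)) ∧
      Jdet d s φ =
        ∫ u in (s ⟨0, by omega⟩)..(s ⟨d - 1, by omega⟩), iteratedDeriv d φ u * Ψ u := by
  classical
  obtain ⟨e, rfl⟩ : ∃ e, d = e + 2 := ⟨d - 2, by omega⟩
  set lastI : Fin (e + 2) := ⟨e + 2 - 1, by omega⟩ with hlastI
  set zeroI : Fin (e + 2) := ⟨0, by omega⟩ with hzeroI
  set a : ℝ := s zeroI with ha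
  set b : ℝ := s lastI with hb
  set S : Finset ℝ := Finset.image s Finset.univ with hSdef
  set V : ℝ := (Matrix.vandermonde s).det with hV
  set P0 : ℝ := ∏ i ∈ Finset.range (e + 2 - 1), (Nat.factorial i : ℝ) with hP0
  set K : ℝ := P0⁻¹ * V with hK
  set f : ℝ → ℝ := iteratedDeriv (e + 2) φ with hf
  set Ψ : ℝ → ℝ := fun u => K * ((e.factorial : ℝ))⁻¹ * dd S (tp e u) with hΨ
  -- basic facts
  have hVpos : 0 < V := vandermonde_det_pos hs
  have hP0pos : 0 < P0 := Finset.prod_pos fun i _ => by positivity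
  have hKpos : 0 < K := mul_pos (inv_pos.mpr hP0pos) hVpos
  have hepos : (0:ℝ) < (e.factorial : ℝ) := by positivity
  have hcardS : S.card = e + 2 := by
    rw [hSdef, Finset.card_image_of_injective _ hs.injective, Finset.card_univ, Fintype.card_fin]
  have hSne : S.Nonempty := Finset.card_pos.mp (by omega)
  have h0ltlast : zeroI < lastI := by
    rw [Fin.lt_def]
    show 0 < e + 2 - 1
    omega
  have hab : a < b := hs h0ltlast
  have haS : a ∈ S := Finset.mem_image_of_mem s (Finset.mem_univ _)
  have hbS : b ∈ S := Finset.mem_image_of_mem s (Finset.mem_univ _)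
  have hle0 : ∀ j : Fin (e + 2), zeroI ≤ j := by
    intro j
    rw [Fin.le_def]
    exact Nat.zero_le _
  have hlelast : ∀ j : Fin (e + 2), j ≤ lastI := by
    intro j
    rw [Fin.le_def]
    show j.val ≤ e + 2 - 1
    omega
  have hminS : S.min' hSne = a := by
    apply le_antisymm (Finset.min'_le _ _ haS)
    refine Finset.le_min' _ _ _ fun y hy => ?_
    obtain ⟨j, _, rfl⟩ := Finset.mem_image.mp hy
    exact hs.monotone (hle0 j)
  have hmaxS : S.max' hSne = b := by
    apply le_antisymm
    · refine Finset.max'_le _ _ _ fun y hy => ?_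
      obtain ⟨j, _, rfl⟩ := Finset.mem_image.mp hy
      exact hs.monotone (hlelast j)
    · exact Finset.le_max' _ _ hbS
  have hVprod : (∏ i : Fin (e + 2), ∏ j ∈ Finset.Ioi i, (s j - s i)) = V :=
    (Matrix.det_vandermonde s).symm
  refine ⟨Ψ, fun u _ => ?_, ?_⟩
  · -- the bounds
    constructor
    · have hdd := dd_tp_nonneg e u S (by omega)
      have hnn : 0 ≤ K * ((e.factorial : ℝ))⁻¹ := by positivity
      simpa [hΨ] using mul_nonneg hnn hdd
    · rw [hVprod]
      have hba : (0:ℝ) < b - a := by linarith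
      rw [le_div_iff₀ hba]
      have h1 : (b - a) * dd S (tp e u) ≤ cb e := by
        have := dd_tp_le e u S hSne (by omega)
        rwa [hmaxS, hminS] at this
      have h2 : cb e ≤ P0 := by
        have := cb_le_prod e
        rwa [hP0, show e + 2 - 1 = e + 1 from rfl]
      have hddpos : 0 ≤ dd S (tp e u) := dd_tp_nonneg e u S (by omega)
      have h1e : (1:ℝ) ≤ (e.factorial : ℝ) := by
        exact_mod_cast Nat.one_le_iff_ne_zero.mpr (Nat.factorial_ne_zero e)
      have hbadd : (b - a) * dd S (tp e u) ≤ P0 * (e.factorial : ℝ) := by nlinarith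
      have hΨu : Ψ u * (b - a) = V * ((b - a) * dd S (tp e u)) * (P0 * (e.factorial : ℝ))⁻¹ := by
        rw [hΨ, hK, mul_inv]
        ring
      rw [hΨu, mul_inv_le_iff₀ (by positivity)]
      nlinarith
  · -- the integral identity
    -- Taylor data
    have hcast : ((e + 2 : ℕ) : ℕ∞) = ((e + 1 : ℕ) : ℕ∞) + 1 := by push_cast; ring
    have hφ2 := hφ
    rw [hcast] at hφ2
    have hφ' : ContDiff ℝ ((e + 1 : ℕ) : ℕ∞) (deriv φ) := (contDiff_succ_iff_deriv.mp hφ2).2.2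
    have hfc : Continuous f := by
      rw [hf]; exact hφ.continuous_iteratedDeriv (e + 2) (by exact_mod_cast le_rfl)
    have hiter : iteratedDeriv (e + 1) (deriv φ) = f := by
      rw [hf, ← iteratedDeriv_succ']
    -- integrability of the kernel integrand
    have hint : ∀ (y c₁ c₂ : ℝ), IntervalIntegrable
        (fun u => f u * tp e u y / (e.factorial : ℝ)) volume c₁ c₂ := by
      intro y c₁ c₂
      have hH : Continuous (fun u => f u * (y - u) ^ e / (e.factorial : ℝ)) := by
        have := hfc
        continuity
      have heq : (fun u => f u * tp e u y / (e.factorial : ℝ))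
          = Set.indicator (Set.Iio y) (fun u => f u * (y - u) ^ e / (e.factorial : ℝ)) := by
        funext u
        by_cases h : u < y
        · rw [Set.indicator_of_mem (Set.mem_Iio.mpr h), tp_of_lt h]
        · rw [Set.indicator_of_notMem (by simpa using not_lt.mp h), tp_of_ge (not_lt.mp h),
            mul_zero, zero_div]
      rw [heq, intervalIntegrable_iff]
      exact (intervalIntegrable_iff.mp (hH.intervalIntegrable c₁ c₂)).indicator measurableSet_Iio
    -- the Taylor polynomial part and the remainder part
    set P : ℝ → ℝ := fun y => ∑ k ∈ Finset.range (e + 1),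
      (k.factorial : ℝ)⁻¹ * (y - a) ^ k * iteratedDeriv (k + 1) φ a with hPdef
    set g : ℝ → ℝ := fun y => ∫ u in a..b, f u * tp e u y / (e.factorial : ℝ) with hgdef
    have hg : ∀ j : Fin (e + 2), deriv φ (s j) = P (s j) + g (s j) := by
      intro j
      have hsja : a ≤ s j := hs.monotone (hle0 j)
      have hsjb : s j ≤ b := hs.monotone (hlelast j)
      have htay := taylor_integral_remainder' (f := deriv φ) (n := e) hφ' hsja
      -- rewrite the polynomial part
      have hpoly : (∑ k ∈ Finset.range (e + 1),
          (k.factorial : ℝ)⁻¹ * (s j - a) ^ k * iteratedDeriv k (deriv φ) a) = P (s j) := by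
        refine Finset.sum_congr rfl fun k _ => ?_
        rw [← iteratedDeriv_succ']
      -- rewrite the remainder part
      have hrem : (∫ u in a..(s j), (e.factorial : ℝ)⁻¹ * (s j - u) ^ e
            * iteratedDeriv (e + 1) (deriv φ) u) = g (s j) := by
        have hsplit : (∫ u in a..b, f u * tp e u (s j) / (e.factorial : ℝ))
            = (∫ u in a..(s j), f u * tp e u (s j) / (e.factorial : ℝ))
              + ∫ u in (s j)..b, f u * tp e u (s j) / (e.factorial : ℝ) :=
          (intervalIntegral.integral_add_adjacent_intervals (hint _ _ _) (hint _ _ _)).symm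
        have hzero : (∫ u in (s j)..b, f u * tp e u (s j) / (e.factorial : ℝ)) = 0 := by
          rw [intervalIntegral.integral_congr (g := fun _ => (0:ℝ)) ?_,
            intervalIntegral.integral_zero]
          intro u hu
          rw [Set.uIcc_of_le hsjb] at hu
          show f u * tp e u (s j) / (e.factorial : ℝ) = 0
          rw [tp_of_ge hu.1, mul_zero, zero_div]
        have hae : ∀ᵐ (u : ℝ), u ≠ s j := by
          rw [MeasureTheory.ae_iff]
          have hset : {u : ℝ | ¬ u ≠ s j} = {s j} := by ext u; simp
          rw [hset]
          exact measure_singleton _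
        have hcongr : (∫ u in a..(s j), f u * tp e u (s j) / (e.factorial : ℝ))
            = ∫ u in a..(s j), (e.factorial : ℝ)⁻¹ * (s j - u) ^ e
                * iteratedDeriv (e + 1) (deriv φ) u := by
          refine intervalIntegral.integral_congr_ae ?_
          filter_upwards [hae] with u hu hmem
          rw [Set.uIoc_of_le hsja] at hmem
          have hult : u < s j := lt_of_le_of_ne hmem.2 hu
          show f u * tp e u (s j) / (e.factorial : ℝ)
            = (e.factorial : ℝ)⁻¹ * (s j - u) ^ e * iteratedDeriv (e + 1) (deriv φ) u
          rw [tp_of_lt hult, hiter]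
          ring
        rw [hgdef]
        show _ = ∫ u in a..b, f u * tp e u (s j) / (e.factorial : ℝ)
        rw [hsplit, hzero, add_zero, hcongr]
      rw [hpoly, hrem] at htay
      exact htay
    -- determinant manipulation
    have hjmat : Jmat (e + 2) s φ = (Bmat s).updateRow lastI (fun j => deriv φ (s j)) := by
      ext i j
      by_cases hi : i = lastI
      · subst hi
        have hcond : ¬ ((lastI : Fin (e + 2)).val < e + 2 - 1) := lt_irrefl _
        simp only [Jmat, Matrix.of_apply, hcond, if_false, Matrix.updateRow_self]
      · have hival : i.val < e + 2 - 1 := by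
          have h1 := i.isLt
          have h2 : i.val ≠ e + 2 - 1 := by
            intro h
            exact hi (Fin.ext h)
          omega
        rw [Matrix.updateRow_ne hi]
        simp only [Jmat, Matrix.of_apply, if_pos hival, Bmat]
    have hvecsplit : (fun j => deriv φ (s j)) = (fun j => P (s j)) + (fun j => g (s j)) := by
      funext j
      exact hg j
    have hddP : dd S P = 0 := by
      rw [hPdef, dd_sum]
      refine Finset.sum_eq_zero fun k hk => ?_
      have hcongr : dd S (fun y => (k.factorial : ℝ)⁻¹ * (y - a) ^ k * iteratedDeriv (k + 1) φ a)
          = dd S (fun y => ((k.factorial : ℝ)⁻¹ * iteratedDeriv (k + 1) φ a) * (y - a) ^ k) :=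
        dd_congr fun y _ => by ring
      rw [hcongr, dd_const_mul, dd_pow_eq_zero k a S (by
        have := Finset.mem_range.mp hk; omega), mul_zero]
    have hdetP : ((Bmat s).updateRow lastI (fun j => P (s j))).det = 0 := by
      rw [det_dd (by omega) hs P, hddP, mul_zero]
    -- the remainder determinant is the desired integral
    have hdetg : ((Bmat s).updateRow lastI (fun j => g (s j))).det
        = ∫ u in a..b, f u * Ψ u := by
      rw [det_dd (by omega) hs g, dd_image hs g, ← hP0, ← hV]
      have hstep1 : ∀ j : Fin (e + 2), g (s j) / ∏ i ∈ Finset.univ.erase j, (s j - s i)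
          = ∫ u in a..b, (f u * tp e u (s j) / (e.factorial : ℝ))
              / ∏ i ∈ Finset.univ.erase j, (s j - s i) := by
        intro j
        rw [hgdef]
        exact (intervalIntegral.integral_div _ _).symm
      rw [Finset.sum_congr rfl fun j _ => hstep1 j]
      rw [← intervalIntegral.integral_finset_sum (fun j _ => (hint (s j) a b).div_const _)]
      rw [← intervalIntegral.integral_const_mul]
      refine intervalIntegral.integral_congr fun u _ => ?_
      show (P0⁻¹ * V) * (∑ j : Fin (e + 2), f u * tp e u (s j) / (e.factorial : ℝ)
          / ∏ i ∈ Finset.univ.erase j, (s j - s i)) = f u * Ψ u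
      rw [Finset.mul_sum]
      have hterm : ∀ j : Fin (e + 2), (P0⁻¹ * V) * (f u * tp e u (s j) / (e.factorial : ℝ)
            / ∏ i ∈ Finset.univ.erase j, (s j - s i))
          = (f u * (K * ((e.factorial : ℝ))⁻¹))
              * (tp e u (s j) / ∏ i ∈ Finset.univ.erase j, (s j - s i)) := by
        intro j
        rw [hK]
        ring
      rw [Finset.sum_congr rfl fun j _ => hterm j, ← Finset.mul_sum, ← dd_image hs (tp e u), hΨ]
      ring
    show (Jmat (e + 2) s φ).det = ∫ u in a..b, f u * Ψ u
    rw [hjmat, hvecsplit, Matrix.det_updateRow_add, hdetP, hdetg, zero_add]
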